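/- Let n ≥ 0, let B be an (n+1)×(n+1) real matrix, and let C be an invertible (n+1)×(n+1) real matrix such that C² = I and C·exp(tB) = exp(tB)·C for all t ∈ ℝ, where exp denotes the matrix exponential. Then the map A : ℝˣ → GL_{n+1}(ℝ) defined by A(r) = exp(B·log r) for r > 0 and A(r) = C·exp(B·log|r|) for r < 0 is well defined (each value is an invertible matrix) and is a group homomorphism: A(rs) = A(r)A(s) for all r, s ∈ ℝˣ. -/

import Mathlib

open NormedSpace

/-- Reconstruction direction of the paper's Remark 3.3: a pair `(B, C)` with
`C² = I` and `C·exp(tB) = exp(tB)·C` for all `t ∈ ℝ` gives rise to a group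
homomorphism `A : ℝˣ → GL_{n+1}(ℝ)` via `A(r) = exp(B log r)` for `r > 0` and
`A(r) = C·exp(B log |r|)` for `r < 0`. -/
theorem pair_gives_group_hom (n : ℕ)
    (B : Matrix (Fin (n + 1)) (Fin (n + 1)) ℝ)
    (C : Matrix (Fin (n + 1)) (Fin (n + 1)) ℝ) (hC : IsUnit C)
    (hC2 : C * C = 1)
    (hcomm : ∀ t : ℝ, C * exp (t • B) = exp (t • B) * C)
    (A : ℝˣ → Matrix (Fin (n + 1)) (Fin (n + 1)) ℝ)
    (hA : ∀ r : ℝˣ, A r =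
      if (0 : ℝ) < (r : ℝ) then exp (Real.log (r : ℝ) • B)
      else C * exp (Real.log |(r : ℝ)| • B)) :
    (∀ r : ℝˣ, IsUnit (A r)) ∧ ∀ r s : ℝˣ, A (r * s) = A r * A s := by
  have hexp : ∀ a b : ℝ, exp (a • B) * exp (b • B) = exp ((a + b) • B) := by
    intro a b
    rw [add_smul, Matrix.exp_add_of_commute]
    exact (Commute.refl B).smul_left a |>.smul_right b
  constructor
  · intro r
    rw [hA r]
    split
    · exact Matrix.isUnit_exp _
    · exact hC.mul (Matrix.isUnit_exp _)
  · intro r s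
    rw [hA, hA, hA]
    have hr := r.ne_zero
    have hs := s.ne_zero
    have hlog : Real.log |(r : ℝ) * s| = Real.log |(r : ℝ)| + Real.log |(s : ℝ)| := by
      rw [abs_mul, Real.log_mul (abs_ne_zero.mpr hr) (abs_ne_zero.mpr hs)]
    rcases lt_or_gt_of_ne hr with hrneg | hrpos <;>
      rcases lt_or_gt_of_ne hs with hsneg | hspos
    · have hrs : (0:ℝ) < (r : ℝ) * s := mul_pos_of_neg_of_neg hrneg hsneg
      rw [Units.val_mul, if_pos hrs, if_neg (not_lt.2 hrneg.le), if_neg (not_lt.2 hsneg.le)]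
      rw [mul_assoc, ← mul_assoc (exp (Real.log |(r:ℝ)| • B)), ← hcomm, ← mul_assoc,
        ← mul_assoc, hC2, one_mul, hexp, ← hlog,
        Real.log_abs]
    · have hrs : (r : ℝ) * s < 0 := mul_neg_of_neg_of_pos hrneg hspos
      rw [Units.val_mul, if_neg (not_lt.2 hrs.le), if_neg (not_lt.2 hrneg.le), if_pos hspos]
      rw [mul_assoc, hexp, hlog, Real.log_abs (s:ℝ)]
    · have hrs : (r : ℝ) * s < 0 := mul_neg_of_pos_of_neg hrpos hsneg
      rw [Units.val_mul, if_neg (not_lt.2 hrs.le), if_pos hrpos, if_neg (not_lt.2 hsneg.le)]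
      rw [← mul_assoc, ← hcomm, mul_assoc, hexp, hlog, Real.log_abs (r:ℝ)]
    · have hrs : (0:ℝ) < (r : ℝ) * s := mul_pos hrpos hspos
      rw [Units.val_mul, if_pos hrs, if_pos hrpos, if_pos hspos, hexp,
        ← Real.log_mul hr hs]
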